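/- Let f ∈ K[x] be separable with roots a in a splitting field, and F a G_a-invariant polynomial such that e_a^F : G_a\S_n → K(a) is injective. If b = [b_1,...,b_n] is an ordering of the roots of f in another splitting field with F(b) = F(a) ∈ K, then the assignment a_i ↦ b_i extends to a K-isomorphism K(a) → K(b). -/

import Mathlib

open Polynomial

lemma aux_splitting {K L : Type*} [Field K] [Field L] [Algebra K L] {n : ℕ}
    (f : Polynomial K) (a : Fin n → L)
    (hroots : f.map (algebraMap K L) = ∏ i, (Polynomial.X - Polynomial.C (a i)))
    (hgen : Algebra.adjoin K (Set.range a) = ⊤) :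
    f.IsSplittingField K L := by
  have hprod : (∏ i, (X - C (a i))) =
      ((Finset.univ.val.map a).map fun x => X - C x).prod := by
    rw [Multiset.map_map]; rfl
  have hroots' : (f.map (algebraMap K L)).roots = Finset.univ.val.map a := by
    rw [hroots, hprod, roots_multiset_prod_X_sub_C]
  constructor
  · rw [hroots]
    exact Splits.prod fun i _ => Splits.X_sub_C _
  · have : f.rootSet L = Set.range a := by
      rw [rootSet, aroots, hroots']
      ext x
      simp [List.mem_ofFn]
    rw [this, hgen]

lemma aux_ne_zero {K L : Type*} [Field K] [Field L] [Algebra K L] {n : ℕ}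
    (f : Polynomial K) (a : Fin n → L)
    (hroots : f.map (algebraMap K L) = ∏ i, (Polynomial.X - Polynomial.C (a i))) :
    f ≠ 0 := by
  intro h
  have hm : (f.map (algebraMap K L)).Monic := by
    rw [hroots]; exact monic_prod_of_monic _ _ fun i _ => monic_X_sub_C _
  rw [h, Polynomial.map_zero] at hm
  exact (one_ne_zero (α := L)) (by simpa [Monic] using hm.symm)

lemma aux_inj {K L : Type*} [Field K] [Field L] [Algebra K L] {n : ℕ}
    (f : Polynomial K) (hsep : f.Separable) (a : Fin n → L)
    (hroots : f.map (algebraMap K L) = ∏ i, (Polynomial.X - Polynomial.C (a i))) :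
    Function.Injective a := by
  have hprod : (∏ i, (X - C (a i))) =
      ((Finset.univ.val.map a).map fun x => X - C x).prod := by
    rw [Multiset.map_map]; rfl
  have hroots' : (f.map (algebraMap K L)).roots = Finset.univ.val.map a := by
    rw [hroots, hprod, roots_multiset_prod_X_sub_C]
  have hnodup : (Finset.univ.val.map a).Nodup := by
    rw [← hroots']; exact nodup_roots (hsep.map)
  intro i j h
  exact Multiset.inj_on_of_nodup_map hnodup i (by simp) j (by simp) h

/-- If `F` is a `G_a`-invariant (stabiliser exactly `G_a`) with `e_a^F` injective on
`G_a\Sₙ`, and `F(b) = F(a) ∈ K`, then `a_i ↦ b_i` defines a `K`-isomorphism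
`K(a) → K(b)`. -/
theorem stmt7 (K L L' : Type*) [Field K] [Field L] [Algebra K L]
    [Field L'] [Algebra K L'] [FiniteDimensional K L] [IsGalois K L] (n : ℕ)
    (f : Polynomial K) (hsep : f.Separable)
    (a : Fin n → L) (b : Fin n → L')
    (hrootsa : f.map (algebraMap K L) = ∏ i, (Polynomial.X - Polynomial.C (a i)))
    (hgena : Algebra.adjoin K (Set.range a) = ⊤)
    (hrootsb : f.map (algebraMap K L') = ∏ i, (Polynomial.X - Polynomial.C (b i)))
    (hgenb : Algebra.adjoin K (Set.range b) = ⊤)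
    (G : Subgroup (Equiv.Perm (Fin n)))
    (hG : ∀ π : Equiv.Perm (Fin n),
      π ∈ G ↔ ∃ g : L ≃ₐ[K] L, ∀ i, g (a i) = a (π i))
    (F : MvPolynomial (Fin n) K)
    (hstab : ∀ σ : Equiv.Perm (Fin n), MvPolynomial.rename ⇑σ F = F ↔ σ ∈ G)
    (hinj : ∀ σ σ' : Equiv.Perm (Fin n),
      MvPolynomial.aeval (fun i => a (σ⁻¹ i)) F
        = MvPolynomial.aeval (fun i => a (σ'⁻¹ i)) F → ∃ g ∈ G, σ = g * σ')
    (c : K)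
    (hca : MvPolynomial.aeval a F = algebraMap K L c)
    (hcb : MvPolynomial.aeval b F = algebraMap K L' c) :
    ∃ ψ : L ≃ₐ[K] L', ∀ i, ψ (a i) = b i := by
  classical
  have hne : f ≠ 0 := aux_ne_zero f a hrootsa
  have ha_inj : Function.Injective a := aux_inj f hsep a hrootsa
  have hb_inj : Function.Injective b := aux_inj f hsep b hrootsb
  haveI hSFa : f.IsSplittingField K L := aux_splitting f a hrootsa hgena
  haveI hSFb : f.IsSplittingField K L' := aux_splitting f b hrootsb hgenb
  let φ : L ≃ₐ[K] L' :=
    (IsSplittingField.algEquiv L f).trans (IsSplittingField.algEquiv L' f).symm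
  -- each φ (a i) is a root of f over L'
  have hrb : (f.map (algebraMap K L')).roots = Finset.univ.val.map b := by
    rw [hrootsb, show (∏ i, (X - C (b i))) =
      ((Finset.univ.val.map b).map fun x => X - C x).prod by rw [Multiset.map_map]; rfl,
      roots_multiset_prod_X_sub_C]
  have hmem : ∀ i, ∃ j, φ (a i) = b j := by
    intro i
    have h0 : Polynomial.aeval (a i) f = 0 := by
      rw [Polynomial.aeval_def, ← Polynomial.eval_map, hrootsa]
      rw [Polynomial.eval_prod]
      exact Finset.prod_eq_zero (Finset.mem_univ i) (by simp)
    have h1 : Polynomial.aeval (φ (a i)) f = 0 := by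
      have := Polynomial.aeval_algHom_apply (φ : L →ₐ[K] L') (a i) f
      simp only [AlgEquiv.coe_algHom] at this
      rw [this, h0, map_zero]
    have h2 : φ (a i) ∈ (f.map (algebraMap K L')).roots := by
      rw [Polynomial.mem_roots ((Polynomial.map_ne_zero_iff
        (algebraMap K L').injective).mpr hne)]
      rwa [Polynomial.IsRoot, Polynomial.eval_map, ← Polynomial.aeval_def]
    rw [hrb] at h2
    obtain ⟨j, _, hj⟩ := Multiset.mem_map.mp h2
    exact ⟨j, hj.symm⟩
  choose τ hτ using hmem
  have hτinj : Function.Injective τ := fun i j h => ha_inj (φ.injective (by rw [hτ, hτ, h]))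
  let σ : Equiv.Perm (Fin n) := Equiv.ofBijective τ (Finite.injective_iff_bijective.mp hτinj)
  have hσ : ∀ i, φ (a i) = b (σ i) := hτ
  have hφb : ∀ i, φ (a (σ⁻¹ i)) = b i := by
    intro i
    rw [hσ (σ⁻¹ i)]
    simp
  have haux : ∀ g : Fin n → L,
      φ (MvPolynomial.aeval g F) = MvPolynomial.aeval (fun i => φ (g i)) F := by
    intro g
    have := MvPolynomial.comp_aeval_apply (φ : L →ₐ[K] L') F (f := g)
    simpa using this
  have key : MvPolynomial.aeval (fun i => a (σ⁻¹ i)) F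
      = MvPolynomial.aeval (fun i => a ((1 : Equiv.Perm (Fin n))⁻¹ i)) F := by
    apply φ.injective
    rw [haux, haux]
    have e1 : (fun i => φ (a (σ⁻¹ i))) = b := funext hφb
    have e2 : (fun i => φ (a ((1 : Equiv.Perm (Fin n))⁻¹ i))) = fun i => φ (a i) := by
      funext i; simp
    rw [e1, e2, hcb, ← haux a, hca, AlgEquiv.commutes]
  obtain ⟨g, hgG, hσg⟩ := hinj σ 1 key
  have hσG : σ ∈ G := by rw [hσg, mul_one]; exact hgG
  obtain ⟨ψ₀, hψ₀⟩ := (hG σ⁻¹).mp (inv_mem hσG)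
  refine ⟨ψ₀.trans φ, fun i => ?_⟩
  simp only [AlgEquiv.trans_apply, hψ₀ i, hφb i]
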